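/- Define b(1,j,k) := (−1)^{j+1−k} B_{j+1−k}/(j+1−k)! for 1 ≤ k ≤ 1+j, where B_n are Bernoulli numbers, and recursively b(i,j,k) := ∑_{m=0}^{min(j, i+j−k)} ((−1)^m B_m/m!)·b(i−1, j+1−m, k) for i ≥ 2. Then for every positive integer i and 1 ≤ k ≤ i+1, b(i,1,k) = ∑_{(l₁,…,l_k)∈P(k,i+1)} 1/(l₁⋯l_k). -/

import Mathlib

open Finset Polynomial

/-- The set of `k`-tuples of positive integers summing to `n`. -/
def P (k n : ℕ) : Finset (Fin k → ℕ) :=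
  (Finset.Nat.antidiagonalTuple k n).filter fun l => ∀ i, 0 < l i

/-- `∑_{(l₁,…,l_k)∈P(k,n)} 1/(l₁⋯l_k)`. -/
def S (k n : ℕ) : ℚ := ∑ l ∈ P k n, (∏ i, (l i : ℚ))⁻¹

/-- `e_l(1,2,…,m)` : the l-th elementary symmetric polynomial evaluated at 1,…,m. -/
def esym (m l : ℕ) : ℚ := (((Finset.range m).val.map fun i => ((i : ℚ) + 1)).esymm l)

/-- The coefficients b(i,j,k) defined recursively from Bernoulli numbers. -/
def b : ℕ → ℕ → ℕ → ℚ
  | 0, _, _ => 0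
  | 1, j, k => (-1) ^ (j + 1 - k) * _root_.bernoulli (j + 1 - k) / (j + 1 - k).factorial
  | i + 2, j, k =>
      ∑ m ∈ Finset.range (min j (i + 2 + j - k) + 1),
        (-1) ^ m * _root_.bernoulli m / m.factorial * b (i + 1) (j + 1 - m) k

noncomputable section BAux

open PowerSeries

/-- `1 - e^{-t}`. -/
def Eb : PowerSeries ℚ :=
  PowerSeries.mk fun n => if n = 0 then 0 else (-1 : ℚ) ^ (n + 1) / (n.factorial : ℚ)

/-- `t/(1-e^{-t})`. -/
def Cb : PowerSeries ℚ := bernoulli'PowerSeries ℚ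

/-- `-log(1-t)`. -/
def Lb : PowerSeries ℚ := PowerSeries.mk fun n => (n : ℚ)⁻¹

def Mb : PowerSeries ℚ := PowerSeries.mk fun n => ((n : ℚ) + 1)⁻¹

def pb (N r : ℕ) : ℚ := PowerSeries.coeff N (Eb ^ r)

lemma coeff_Cb (m : ℕ) : PowerSeries.coeff m Cb = bernoulli' m / m.factorial := by
  simp [Cb, bernoulli'PowerSeries]

lemma coeff_Eb (m : ℕ) :
    PowerSeries.coeff m Eb = if m = 0 then 0 else (-1 : ℚ) ^ (m + 1) / (m.factorial : ℚ) := by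
  simp [Eb]

lemma pb_zero (N : ℕ) : pb N 0 = if N = 0 then 1 else 0 := by
  simp [pb, PowerSeries.coeff_one]

lemma pb_one (N : ℕ) : pb N 1 = if N = 0 then 0 else (-1 : ℚ) ^ (N + 1) / (N.factorial : ℚ) := by
  simp [pb, coeff_Eb]

lemma pb_eq_zero {N r : ℕ} (h : N < r) : pb N r = 0 := by
  have hX : (X : PowerSeries ℚ) ∣ Eb := by
    rw [PowerSeries.X_dvd_iff]
    simp [Eb, PowerSeries.constantCoeff_mk]
  obtain ⟨g, hg⟩ := pow_dvd_pow_of_dvd hX r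
  rw [pb, hg, PowerSeries.coeff_X_pow_mul']
  simp [Nat.not_le_of_lt h, not_le.mpr h]

end BAux
section CE
open PowerSeries

lemma hCE : Cb * Eb = PowerSeries.X := by
  ext N
  rw [PowerSeries.coeff_mul, Finset.Nat.sum_antidiagonal_eq_sum_range_succ_mk]
  rw [Finset.sum_range_succ]
  simp only [coeff_Cb, coeff_Eb, Nat.sub_self, if_pos rfl, mul_zero, add_zero]
  have hfN : (N.factorial : ℚ) ≠ 0 := Nat.cast_ne_zero.mpr N.factorial_ne_zero
  have key : ∀ i ∈ Finset.range N,
      bernoulli' i / (i.factorial : ℚ) *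
        (if N - i = 0 then (0:ℚ) else (-1 : ℚ) ^ (N - i + 1) / ((N - i).factorial : ℚ))
      = (-1:ℚ) ^ (N + 1) / (N.factorial : ℚ) * ((N.choose i : ℚ) * _root_.bernoulli i) := by
    intro i hi
    rw [Finset.mem_range] at hi
    have h1 : N - i ≠ 0 := Nat.sub_ne_zero_of_lt hi
    rw [if_neg h1]
    have hb : bernoulli' i = (-1 : ℚ) ^ i * _root_.bernoulli i := bernoulli'_eq_bernoulli i
    have hsgn : (-1 : ℚ) ^ i * (-1 : ℚ) ^ (N - i + 1) = (-1 : ℚ) ^ (N + 1) := by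
      rw [← pow_add]
      congr 1
      omega
    have hchoose : (N.choose i : ℚ)
        = (N.factorial : ℚ) / ((i.factorial : ℚ) * ((N - i).factorial : ℚ)) := by
      rw [Nat.cast_choose ℚ hi.le]
    have hfi : (i.factorial : ℚ) ≠ 0 := Nat.cast_ne_zero.mpr i.factorial_ne_zero
    have hfNi : ((N - i).factorial : ℚ) ≠ 0 := Nat.cast_ne_zero.mpr (N - i).factorial_ne_zero
    rw [hb, hchoose]
    have e1 : (-1:ℚ) ^ i * _root_.bernoulli i / (i.factorial : ℚ) *
        ((-1 : ℚ) ^ (N - i + 1) / ((N - i).factorial : ℚ))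
        = ((-1:ℚ) ^ i * (-1 : ℚ) ^ (N - i + 1)) *
          (_root_.bernoulli i / ((i.factorial : ℚ) * ((N - i).factorial : ℚ))) := by
      ring
    have e2 : (-1:ℚ) ^ (N + 1) / (N.factorial : ℚ) *
        ((N.factorial : ℚ) / ((i.factorial : ℚ) * ((N - i).factorial : ℚ)) * _root_.bernoulli i)
        = ((-1:ℚ) ^ (N + 1)) *
          (_root_.bernoulli i / ((i.factorial : ℚ) * ((N - i).factorial : ℚ))) := by
      field_simp
    rw [e1, e2, hsgn]
  rw [Finset.sum_congr rfl key, ← Finset.mul_sum, _root_.sum_bernoulli]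
  simp only [if_true, mul_zero, add_zero]
  rw [PowerSeries.coeff_X]
  rcases eq_or_ne N 1 with h | h
  · subst h; norm_num
  · simp [h]

end CE
section COMP
open PowerSeries

lemma derivEb : d⁄dX ℚ Eb = 1 - Eb := by
  ext n
  rw [PowerSeries.coeff_derivative]
  simp only [coeff_Eb, Nat.succ_ne_zero, if_false, map_sub, PowerSeries.coeff_one]
  rcases eq_or_ne n 0 with h | h
  · subst h; norm_num [Eb]
  · rw [if_neg h]
    simp only [Eb, PowerSeries.coeff_mk, if_neg h]
    have h1 : ((n+1).factorial : ℚ) = ((n:ℚ)+1) * (n.factorial : ℚ) := by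
      rw [Nat.factorial_succ]; push_cast; ring
    have h2 : (n.factorial : ℚ) ≠ 0 := Nat.cast_ne_zero.mpr n.factorial_ne_zero
    have h3 : ((n:ℚ)+1) ≠ 0 := by positivity
    rw [h1]
    field_simp
    ring

lemma pb_rec (N r : ℕ) :
    ((N : ℚ) + 1) * pb (N + 1) (r + 1) = ((r : ℚ) + 1) * (pb N r - pb N (r + 1)) := by
  have hD : d⁄dX ℚ (Eb ^ (r + 1)) = (r + 1) • Eb ^ r • d⁄dX ℚ Eb := by
    simpa using (PowerSeries.derivative ℚ).leibniz_pow (a := Eb) (r + 1)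
  have := congrArg (fun f => PowerSeries.coeff N f) hD
  simp only [PowerSeries.coeff_derivative, derivEb, smul_eq_mul, map_nsmul, map_mul] at this
  rw [mul_sub, mul_one, map_sub] at this
  have : PowerSeries.coeff (N+1) (Eb ^ (r+1)) * ((N:ℚ)+1) =
      (r+1) • (PowerSeries.coeff N (Eb ^ r) - PowerSeries.coeff N (Eb ^ r * Eb)) := by
    simpa using this
  rw [← pow_succ] at this
  rw [nsmul_eq_mul] at this
  push_cast at this
  unfold pb
  linarith [this]

/-- Composition `F ∘ Eb` defined coefficientwise. -/
noncomputable def cEb (F : PowerSeries ℚ) : PowerSeries ℚ :=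
  PowerSeries.mk fun N => ∑ r ∈ Finset.range (N + 1), PowerSeries.coeff r F * pb N r

lemma coeff_comp (F : PowerSeries ℚ) (N : ℕ) :
    PowerSeries.coeff N (cEb F) = ∑ r ∈ Finset.range (N + 1), PowerSeries.coeff r F * pb N r := by
  simp [cEb]

lemma comp_one : cEb 1 = 1 := by
  ext N
  rw [coeff_comp]
  rcases eq_or_ne N 0 with h | h
  · subst h; simp [pb_zero, PowerSeries.coeff_one]
  · rw [Finset.sum_eq_single 0]
    · simp [pb_zero, h, PowerSeries.coeff_one]
    · intro r _ hr
      simp [PowerSeries.coeff_one, hr]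
    · intro habs; simp at habs
  
lemma comp_X : cEb PowerSeries.X = Eb := by
  ext N
  rw [coeff_comp]
  rcases eq_or_ne N 0 with h | h
  · subst h
    simp [PowerSeries.coeff_X, pb_zero, coeff_Eb]
  · rw [Finset.sum_eq_single 1]
    · simp [PowerSeries.coeff_X, pb, pow_one]
    · intro r _ hr
      simp [PowerSeries.coeff_X, hr]
    · intro habs
      simp only [Finset.mem_range, not_lt] at habs
      omega

lemma comp_mul (F G : PowerSeries ℚ) : cEb (F * G) = cEb F * cEb G := by
  ext N
  set h : ℕ × ℕ → ℚ := fun p =>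
    PowerSeries.coeff p.1 F * PowerSeries.coeff p.2 G * PowerSeries.coeff N (Eb ^ (p.1 + p.2))
    with hh
  have hsq : ∀ p : ℕ × ℕ, N < p.1 + p.2 → h p = 0 := by
    intro p hp
    have hz : PowerSeries.coeff N (Eb ^ (p.1 + p.2)) = 0 := pb_eq_zero hp
    simp only [hh]
    rw [hz, mul_zero]
  -- LHS equals the rectangle sum
  have hfiber :
      ∑ p ∈ (Finset.range (N+1) ×ˢ Finset.range (N+1)), h p
      = ∑ r ∈ Finset.range (2*N+1),
          ∑ p ∈ (Finset.range (N+1) ×ˢ Finset.range (N+1)).filter (fun p => p.1 + p.2 = r), h p := by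
    refine (Finset.sum_fiberwise_of_maps_to ?_ h).symm
    intro p hp
    simp only [Finset.mem_product, Finset.mem_range] at hp
    simp only [Finset.mem_range]
    omega
  have hLHS : PowerSeries.coeff N (cEb (F * G))
      = ∑ p ∈ (Finset.range (N+1) ×ˢ Finset.range (N+1)), h p := by
    rw [coeff_comp, hfiber]
    rw [← Finset.sum_subset (Finset.range_subset_range.mpr (by omega : N + 1 ≤ 2*N+1))]
    · refine Finset.sum_congr rfl fun r hr => ?_
      rw [Finset.mem_range] at hr
      have hfib : (Finset.range (N+1) ×ˢ Finset.range (N+1)).filter (fun p => p.1 + p.2 = r)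
          = Finset.HasAntidiagonal.antidiagonal r := by
        ext p
        simp only [Finset.mem_filter, Finset.mem_product, Finset.mem_range,
          Finset.HasAntidiagonal.mem_antidiagonal]
        constructor
        · rintro ⟨_, hq⟩; exact hq
        · intro hq
          refine ⟨⟨?_, ?_⟩, hq⟩ <;> omega
      rw [hfib, PowerSeries.coeff_mul, Finset.sum_mul]
      refine Finset.sum_congr rfl fun q hq => ?_
      rw [Finset.HasAntidiagonal.mem_antidiagonal] at hq
      simp only [hh, hq]
      rfl
    · intro r hr hr'
      simp only [Finset.mem_range, not_lt] at hr'
      refine Finset.sum_eq_zero fun p hp => ?_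
      rw [Finset.mem_filter] at hp
      obtain ⟨-, hpr⟩ := hp
      exact hsq p (by omega)
  -- RHS equals the rectangle sum
  have hRHS : PowerSeries.coeff N (cEb F * cEb G)
      = ∑ p ∈ (Finset.range (N+1) ×ˢ Finset.range (N+1)), h p := by
    rw [PowerSeries.coeff_mul]
    have hterm : ∀ q ∈ Finset.HasAntidiagonal.antidiagonal N,
        PowerSeries.coeff q.1 (cEb F) * PowerSeries.coeff q.2 (cEb G)
        = ∑ r1 ∈ Finset.range (N+1), ∑ r2 ∈ Finset.range (N+1),
            (PowerSeries.coeff r1 F * pb q.1 r1) * (PowerSeries.coeff r2 G * pb q.2 r2) := by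
      intro q hq
      rw [Finset.HasAntidiagonal.mem_antidiagonal] at hq
      rw [coeff_comp, coeff_comp]
      rw [Finset.sum_subset (Finset.range_subset_range.mpr (by omega : q.1 + 1 ≤ N+1))
        (fun r hr hr' => by
          simp only [Finset.mem_range, not_lt] at hr'
          rw [pb_eq_zero (by omega), mul_zero]),
        Finset.sum_subset (Finset.range_subset_range.mpr (by omega : q.2 + 1 ≤ N+1))
        (fun r hr hr' => by
          simp only [Finset.mem_range, not_lt] at hr'
          rw [pb_eq_zero (by omega), mul_zero])]
      rw [Finset.sum_mul_sum]
    rw [Finset.sum_congr rfl hterm]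
    rw [Finset.sum_comm]
    conv_rhs => rw [Finset.sum_product]
    refine Finset.sum_congr rfl fun r1 _ => ?_
    rw [Finset.sum_comm]
    refine Finset.sum_congr rfl fun r2 _ => ?_
    have : ∑ q ∈ Finset.HasAntidiagonal.antidiagonal N,
        (PowerSeries.coeff r1 F * pb q.1 r1) * (PowerSeries.coeff r2 G * pb q.2 r2)
        = PowerSeries.coeff r1 F * PowerSeries.coeff r2 G *
          ∑ q ∈ Finset.HasAntidiagonal.antidiagonal N, pb q.1 r1 * pb q.2 r2 := by
      rw [Finset.mul_sum]
      refine Finset.sum_congr rfl fun q _ => by ring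
    rw [this, hh]
    have : ∑ q ∈ Finset.HasAntidiagonal.antidiagonal N, pb q.1 r1 * pb q.2 r2
        = PowerSeries.coeff N (Eb ^ (r1 + r2)) := by
      rw [pow_add, PowerSeries.coeff_mul]
      rfl
    rw [this]
  rw [hLHS, hRHS]

lemma comp_pow (F : PowerSeries ℚ) (k : ℕ) : cEb (F ^ k) = (cEb F) ^ k := by
  induction k with
  | zero => simpa using comp_one
  | succ k ih => rw [pow_succ, comp_mul, ih, pow_succ]

end COMP
section KEY
open PowerSeries

lemma coeff_Lb (n : ℕ) : PowerSeries.coeff n Lb = (n : ℚ)⁻¹ := by simp [Lb]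

lemma hXM : PowerSeries.X * Mb = Lb := by
  ext n
  cases n with
  | zero =>
    rw [coeff_Lb]
    simp
  | succ n =>
    rw [PowerSeries.coeff_succ_X_mul, coeff_Lb]
    simp [Mb]

lemma comp_L : cEb Lb = PowerSeries.X := by
  ext N
  rw [coeff_comp]
  cases N with
  | zero => simp [coeff_Lb, pb_zero]
  | succ n =>
    rw [Finset.sum_range_succ']
    simp only [coeff_Lb, Nat.cast_zero, inv_zero, zero_mul, add_zero]
    have hterm : ∀ r, ((r + 1 : ℕ) : ℚ)⁻¹ * pb (n + 1) (r + 1)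
        = (pb n r - pb n (r + 1)) / ((n : ℚ) + 1) := by
      intro r
      have hrec := pb_rec n r
      have hn1 : ((n : ℚ) + 1) ≠ 0 := by positivity
      have hr1 : ((r : ℚ) + 1) ≠ 0 := by positivity
      have : pb (n + 1) (r + 1) = ((r : ℚ) + 1) * (pb n r - pb n (r + 1)) / ((n : ℚ) + 1) := by
        field_simp at hrec ⊢
        linarith [hrec]
      rw [this]
      push_cast
      field_simp
    rw [Finset.sum_congr rfl fun r _ => hterm r, ← Finset.sum_div,
      Finset.sum_range_sub' (fun r => pb n r)]
    rw [pb_eq_zero (Nat.lt_succ_self n), pb_zero]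
    rcases eq_or_ne n 0 with h | h
    · subst h; simp
    · rw [if_neg h, PowerSeries.coeff_X, if_neg (by omega)]
      simp

lemma Eb_ne_zero : Eb ≠ 0 := by
  intro h
  have : PowerSeries.coeff 1 Eb = 0 := by rw [h]; simp
  rw [coeff_Eb] at this
  norm_num at this

lemma comp_M : cEb Mb = Cb := by
  have h1 : Eb * cEb Mb = Eb * Cb := by
    calc Eb * cEb Mb = cEb PowerSeries.X * cEb Mb := by rw [comp_X]
      _ = cEb (PowerSeries.X * Mb) := (comp_mul _ _).symm
      _ = cEb Lb := by rw [hXM]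
      _ = PowerSeries.X := comp_L
      _ = Cb * Eb := hCE.symm
      _ = Eb * Cb := mul_comm _ _
  exact mul_left_cancel₀ Eb_ne_zero h1

end KEY
section SLEM
open PowerSeries

lemma S_eq_zero {k n : ℕ} (h : n < k) : S k n = 0 := by
  rw [S]
  refine Finset.sum_eq_zero fun x hx => ?_
  rw [P, Finset.mem_filter, Finset.Nat.mem_antidiagonalTuple] at hx
  obtain ⟨hx1, hx2⟩ := hx
  exfalso
  have : k ≤ ∑ i : Fin k, x i := by
    calc k = ∑ _i : Fin k, 1 := by simp
    _ ≤ ∑ i : Fin k, x i := Finset.sum_le_sum fun i _ => hx2 i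
  omega

lemma S_eq (k n : ℕ) : S k n = PowerSeries.coeff n (Lb ^ k) := by
  have h1 : S k n = ∑ x ∈ Finset.Nat.antidiagonalTuple k n, ∏ i, (x i : ℚ)⁻¹ := by
    rw [S, P]
    have hfil : ∀ x ∈ Finset.Nat.antidiagonalTuple k n,
        ((∏ i, (x i : ℚ))⁻¹ ≠ 0) → ∀ i, 0 < x i := by
      intro x hx hne i
      rcases Nat.eq_zero_or_pos (x i) with h | h
      swap
      · exact h
      · exfalso
        apply hne
        rw [_root_.inv_eq_zero]
        apply Finset.prod_eq_zero (Finset.mem_univ i)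
        rw [h]; simp
    rw [Finset.sum_filter_of_ne hfil]
    exact Finset.sum_congr rfl fun x _ => by rw [← Finset.prod_inv_distrib]
  rw [h1, PowerSeries.coeff_pow]
  refine Finset.sum_nbij'
    (i := fun x => Finsupp.onFinset (Finset.range k)
      (fun a => if h : a < k then x ⟨a, h⟩ else 0)
      (fun a ha => by
        rw [Finset.mem_range]
        by_contra hak
        exact ha (dif_neg hak)))
    (j := fun l (i : Fin k) => l i.1) ?_ ?_ ?_ ?_ ?_
  · intro x hx
    rw [Finset.Nat.mem_antidiagonalTuple] at hx
    rw [Finset.mem_finsuppAntidiag]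
    constructor
    · rw [← hx]
      have : (Finset.range k).sum
          ⇑(Finsupp.onFinset (Finset.range k) (fun a => if h : a < k then x ⟨a, h⟩ else 0)
            (fun a ha => by
              rw [Finset.mem_range]
              by_contra hak
              exact ha (dif_neg hak)))
          = ∑ a ∈ Finset.range k, (if h : a < k then x ⟨a, h⟩ else 0) :=
        Finset.sum_congr rfl fun a _ => rfl
      rw [this, ← Fin.sum_univ_eq_sum_range (fun a => if h : a < k then x ⟨a, h⟩ else 0) k]
      exact Finset.sum_congr rfl fun i _ => by rw [dif_pos i.2]
    · exact Finsupp.support_onFinset_subset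
  · intro l hl
    rw [Finset.mem_finsuppAntidiag] at hl
    rw [Finset.Nat.mem_antidiagonalTuple]
    rw [Fin.sum_univ_eq_sum_range (fun a => l a) k]
    exact hl.1
  · intro x hx
    funext i
    simp only [Finsupp.onFinset_apply]
    rw [dif_pos i.2]
  · intro l hl
    rw [Finset.mem_finsuppAntidiag] at hl
    ext a
    simp only [Finsupp.onFinset_apply]
    rcases lt_or_ge a k with h | h
    · rw [dif_pos h]
    · rw [dif_neg (not_lt.mpr h)]
      by_contra hne
      have : a ∈ l.support := Finsupp.mem_support_iff.mpr fun hla => hne hla.symm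
      have := hl.2 this
      rw [Finset.mem_range] at this
      omega
  · intro x hx
    rw [← Fin.prod_univ_eq_prod_range (fun a => PowerSeries.coeff
        ((Finsupp.onFinset (Finset.range k) (fun a => if h : a < k then x ⟨a, h⟩ else 0)
          (fun a ha => by
            rw [Finset.mem_range]
            by_contra hak
            exact ha (dif_neg hak))) a) Lb) k]
    refine Finset.prod_congr rfl fun i _ => ?_
    simp only [Finsupp.onFinset_apply]
    rw [dif_pos i.2, coeff_Lb]

end SLEM
section BASESTEP
open PowerSeries

lemma BASE (j k' : ℕ) (hj : 1 ≤ j) (hk : k' ≤ j) :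
    ∑ d ∈ Finset.range j, pb j (j - d) * S (k' + 1) (j + 1 - d)
      = bernoulli' (j - k') / (j - k').factorial := by
  have hW : cEb (PowerSeries.X ^ k' * Mb ^ (k' + 1)) = PowerSeries.X ^ k' * Cb := by
    rw [comp_mul, comp_pow, comp_pow, comp_X, comp_M]
    calc Eb ^ k' * Cb ^ (k' + 1) = (Cb * Eb) ^ k' * Cb := by ring
      _ = PowerSeries.X ^ k' * Cb := by rw [hCE]
  have hc : ∀ r : ℕ, PowerSeries.coeff r (PowerSeries.X ^ k' * Mb ^ (k' + 1))
      = S (k' + 1) (r + 1) := by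
    intro r
    have h2 : PowerSeries.X * (PowerSeries.X ^ k' * Mb ^ (k' + 1)) = Lb ^ (k' + 1) := by
      rw [← hXM]; ring
    rw [← PowerSeries.coeff_succ_X_mul, h2, S_eq]
  have hcoeff := congrArg (fun f => PowerSeries.coeff j f) hW
  rw [coeff_comp] at hcoeff
  rw [Finset.sum_congr rfl (fun r _ => by rw [hc r])] at hcoeff
  rw [PowerSeries.coeff_X_pow_mul' Cb k' j, if_pos hk] at hcoeff
  rw [Finset.sum_range_succ'] at hcoeff
  rw [pb_zero, if_neg (by omega : ¬ j = 0), mul_zero, add_zero] at hcoeff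
  rw [← Finset.sum_range_reflect] at hcoeff
  rw [← coeff_Cb, ← hcoeff]
  refine Finset.sum_congr rfl fun d hd => ?_
  rw [Finset.mem_range] at hd
  have e1 : j - 1 - d + 1 + 1 = j + 1 - d := by omega
  have e2 : j - 1 - d + 1 = j - d := by omega
  rw [e1, e2, mul_comm]

lemma step_core (j e : ℕ) (he : e ≤ j) :
    ∑ m ∈ Finset.range (e + 1), bernoulli' m / m.factorial * pb (j + 1 - m) (j + 1 - e)
      = pb j (j - e) := by
  have hext : ∑ m ∈ Finset.range (e + 1), bernoulli' m / m.factorial * pb (j + 1 - m) (j + 1 - e)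
      = ∑ m ∈ Finset.range (j + 2), bernoulli' m / m.factorial * pb (j + 1 - m) (j + 1 - e) := by
    refine Finset.sum_subset (Finset.range_subset_range.mpr (by omega)) fun m hm hm' => ?_
    rw [Finset.mem_range] at hm hm'
    rw [pb_eq_zero (by omega), mul_zero]
  rw [hext]
  have h2 : ∑ m ∈ Finset.range (j + 2), bernoulli' m / m.factorial * pb (j + 1 - m) (j + 1 - e)
      = PowerSeries.coeff (j + 1) (Cb * Eb ^ (j + 1 - e)) := by
    rw [PowerSeries.coeff_mul, Finset.Nat.sum_antidiagonal_eq_sum_range_succ_mk]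
    exact Finset.sum_congr rfl fun m _ => by rw [coeff_Cb]; rfl
  rw [h2]
  have h3 : Cb * Eb ^ (j + 1 - e) = PowerSeries.X * Eb ^ (j - e) := by
    have : j + 1 - e = (j - e) + 1 := by omega
    rw [this, pow_succ']
    calc Cb * (Eb * Eb ^ (j - e)) = (Cb * Eb) * Eb ^ (j - e) := by ring
      _ = PowerSeries.X * Eb ^ (j - e) := by rw [hCE]
  rw [h3, PowerSeries.coeff_succ_X_mul]
  rfl

end BASESTEP
section MAIN
open PowerSeries

lemma cEqdiv (m : ℕ) :
    (-1 : ℚ) ^ m * _root_.bernoulli m / m.factorial = bernoulli' m / m.factorial := by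
  rw [bernoulli'_eq_bernoulli]

lemma INV : ∀ i : ℕ, ∀ j k : ℕ, 1 ≤ i → 1 ≤ j → 1 ≤ k → k ≤ i + j →
    b i j k = ∑ d ∈ Finset.range j, pb j (j - d) * S k (i + j - d) := by
  intro i
  induction i using Nat.strong_induction_on with
  | _ i ih =>
  match i with
  | 0 => intro j k h; omega
  | 1 =>
    intro j k _ hj hk hkj
    obtain ⟨k', rfl⟩ : ∃ k', k = k' + 1 := ⟨k - 1, by omega⟩
    have hb1 : b 1 j (k' + 1)
        = (-1 : ℚ) ^ (j + 1 - (k' + 1)) * _root_.bernoulli (j + 1 - (k' + 1))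
          / (j + 1 - (k' + 1)).factorial := by
      simp only [b]
    have e3 : j + 1 - (k' + 1) = j - k' := by omega
    rw [hb1, e3, cEqdiv, ← BASE j k' hj (by omega)]
    refine Finset.sum_congr rfl fun d hd => ?_
    rw [Finset.mem_range] at hd
    congr 2
    omega
  | (i + 2) =>
    intro j k _ hj hk hkj
    have hb : b (i + 2) j k = ∑ m ∈ Finset.range (min j (i + 2 + j - k) + 1),
        (-1 : ℚ) ^ m * _root_.bernoulli m / m.factorial * b (i + 1) (j + 1 - m) k := by
      simp only [b]
    rw [hb]
    have hIH : ∀ m ∈ Finset.range (min j (i + 2 + j - k) + 1),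
        (-1 : ℚ) ^ m * _root_.bernoulli m / m.factorial * b (i + 1) (j + 1 - m) k
          = bernoulli' m / m.factorial *
            ∑ d ∈ Finset.range (j + 1 - m), pb (j + 1 - m) (j + 1 - m - d)
              * S k (i + 2 + j - m - d) := by
      intro m hm
      rw [Finset.mem_range] at hm
      have hmin := Nat.lt_succ_iff.mp hm
      have hm1 : m ≤ j := le_trans hmin (min_le_left _ _)
      have hm2 : m ≤ i + 2 + j - k := le_trans hmin (min_le_right _ _)
      rw [ih (i + 1) (by omega) (j + 1 - m) k (by omega) (by omega) hk (by omega)]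
      rw [cEqdiv]
      congr 1
      refine Finset.sum_congr rfl fun d hd => ?_
      rw [Finset.mem_range] at hd
      congr 2
      omega
    rw [Finset.sum_congr rfl hIH]
    rw [Finset.sum_subset (Finset.range_subset_range.mpr
        (by omega : min j (i + 2 + j - k) + 1 ≤ j + 1)) (fun m hm hm' => ?_)]
    swap
    · rw [Finset.mem_range] at hm hm'
      have hmk : i + 2 + j - m < k := by
        rcases le_or_gt j (i + 2 + j - k) with h | h
        · rw [min_eq_left h] at hm'; omega
        · rw [min_eq_right h.le] at hm'; omega
      refine mul_eq_zero_of_right _ (Finset.sum_eq_zero fun d hd => ?_)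
      rw [S_eq_zero (by omega : i + 2 + j - m - d < k), mul_zero]
    have hinner : ∀ m ∈ Finset.range (j + 1),
        bernoulli' m / m.factorial *
          ∑ d ∈ Finset.range (j + 1 - m), pb (j + 1 - m) (j + 1 - m - d) * S k (i + 2 + j - m - d)
        = ∑ e ∈ Finset.range (j + 1),
            bernoulli' m / m.factorial * (pb (j + 1 - m) (j + 1 - e) * S k (i + 2 + j - e)) := by
      intro m hm
      rw [Finset.mem_range] at hm
      set T : ℕ → ℚ := fun e =>
        bernoulli' m / m.factorial * (pb (j + 1 - m) (j + 1 - e) * S k (i + 2 + j - e)) with hT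
      have hsplit : ∑ e ∈ Finset.range (j + 1), T e
          = (∑ e ∈ Finset.Ico 0 m, T e) + ∑ e ∈ Finset.Ico m (j + 1), T e := by
        rw [Finset.range_eq_Ico]
        exact (Finset.sum_Ico_consecutive _ (Nat.zero_le m) (by omega)).symm
      have h0 : ∑ e ∈ Finset.Ico 0 m, T e = 0 :=
        Finset.sum_eq_zero fun e he => by
          rw [Finset.mem_Ico] at he
          rw [hT]
          simp only []
          rw [pb_eq_zero (by omega), zero_mul, mul_zero]
      have hre : ∑ e ∈ Finset.Ico m (j + 1), T e
          = ∑ d ∈ Finset.range (j + 1 - m), T (m + d) := Finset.sum_Ico_eq_sum_range T m (j + 1)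
      rw [hsplit, h0, zero_add, hre, Finset.mul_sum]
      refine Finset.sum_congr rfl fun d hd => ?_
      rw [Finset.mem_range] at hd
      rw [hT]
      simp only []
      have e1 : j + 1 - (m + d) = j + 1 - m - d := by omega
      have e2 : i + 2 + j - (m + d) = i + 2 + j - m - d := by omega
      rw [e1, e2]
    rw [Finset.sum_congr rfl hinner]
    rw [Finset.sum_comm]
    have houter : ∀ e ∈ Finset.range (j + 1),
        ∑ m ∈ Finset.range (j + 1),
          bernoulli' m / m.factorial * (pb (j + 1 - m) (j + 1 - e) * S k (i + 2 + j - e))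
        = pb j (j - e) * S k (i + 2 + j - e) := by
      intro e he
      rw [Finset.mem_range] at he
      have hshrink : ∑ m ∈ Finset.range (e + 1),
          bernoulli' m / m.factorial * (pb (j + 1 - m) (j + 1 - e) * S k (i + 2 + j - e))
          = ∑ m ∈ Finset.range (j + 1),
          bernoulli' m / m.factorial * (pb (j + 1 - m) (j + 1 - e) * S k (i + 2 + j - e)) := by
        refine Finset.sum_subset (Finset.range_subset_range.mpr (by omega)) fun m hm hm' => ?_
        rw [Finset.mem_range] at hm hm'
        rw [pb_eq_zero (by omega), zero_mul, mul_zero]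
      rw [← hshrink]
      have : ∀ m ∈ Finset.range (e + 1),
          bernoulli' m / m.factorial * (pb (j + 1 - m) (j + 1 - e) * S k (i + 2 + j - e))
          = bernoulli' m / m.factorial * pb (j + 1 - m) (j + 1 - e) * S k (i + 2 + j - e) := by
        intro m _; ring
      rw [Finset.sum_congr rfl this, ← Finset.sum_mul, step_core j e (by omega)]
    rw [Finset.sum_congr rfl houter]
    rw [Finset.sum_range_succ]
    rw [Nat.sub_self, pb_zero, if_neg (by omega : ¬ j = 0), zero_mul, add_zero]

theorem stmt15 (i k : ℕ) (hi : 0 < i) (hk1 : 1 ≤ k) (hk2 : k ≤ i + 1) :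
    b i 1 k = S k (i + 1) := by
  rw [INV i 1 k hi le_rfl hk1 (by omega)]
  rw [Finset.sum_range_one]
  have h1 : pb 1 (1 - 0) = 1 := by
    norm_num [pb, pow_one, coeff_Eb]
  rw [h1, one_mul, Nat.sub_zero]

end MAIN
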